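/- Let G be an s-step nilpotent group (G_{s+1} = {1} for the lower central series), τ, g ∈ G, and g(k) = [g⁻¹, τᵏ]. Then the s-th iterated difference of the sequence (g(k)) is identically the identity: D^s g(k) = 1 for every k ≥ 0. -/

import Mathlib

/-- The lower central series with the indexing of the paper: `G₁ = G` and
`G_{j+1} = [G, G_j]`.  (The value at `0` is irrelevant; we set it to `⊤`.) -/
def lcs (G : Type*) [Group G] : ℕ → Subgroup G
  | 0 => ⊤
  | 1 => ⊤
  | (n + 2) => ⁅(⊤ : Subgroup G), lcs G (n + 1)⁆

/-- The difference operator on sequences in a group: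
`(Dh)(k) = h(k)⁻¹ h(k+1)`. -/
def diffOp {G : Type*} [Group G] (h : ℕ → G) : ℕ → G := fun k => (h k)⁻¹ * h (k + 1)

open scoped commutatorElement

/-- The iterated commutators with `τ`. -/
def cSeq {G : Type*} [Group G] (g τ : G) : ℕ → G
  | 0 => g
  | (j + 1) => ⁅(cSeq g τ j)⁻¹, τ⁆

lemma cSeq_mem (G : Type*) [Group G] (g τ : G) :
    ∀ j, cSeq g τ j ∈ lcs G (j + 1)
  | 0 => by simp [cSeq, lcs]
  | (j + 1) => by
    show ⁅(cSeq g τ j)⁻¹, τ⁆ ∈ lcs G (j + 2)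
    rw [show lcs G (j + 2) = ⁅(⊤ : Subgroup G), lcs G (j + 1)⁆ from rfl,
      Subgroup.commutator_comm]
    exact Subgroup.commutator_mem_commutator
      (Subgroup.inv_mem _ (cSeq_mem G g τ j)) (Subgroup.mem_top τ)

lemma diffOp_conj {G : Type*} [Group G] (τ c : G) :
    diffOp (fun k : ℕ => τ ^ k * c * (τ ^ k)⁻¹)
      = fun k : ℕ => τ ^ k * ⁅c⁻¹, τ⁆ * (τ ^ k)⁻¹ := by
  funext k
  simp only [diffOp, pow_succ, commutatorElement_def]
  group

lemma iter_formula {G : Type*} [Group G] (τ g : G) : ∀ j : ℕ,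
    diffOp^[j + 1] (fun k : ℕ => ⁅g⁻¹, τ ^ k⁆)
      = fun k : ℕ => τ ^ k * cSeq g τ (j + 1) * (τ ^ k)⁻¹
  | 0 => by
    funext k
    show (⁅g⁻¹, τ ^ k⁆)⁻¹ * ⁅g⁻¹, τ ^ (k + 1)⁆ = τ ^ k * ⁅g⁻¹, τ⁆ * (τ ^ k)⁻¹
    simp only [commutatorElement_def, pow_succ]
    group
  | (j + 1) => by
    rw [Function.iterate_succ_apply', iter_formula τ g j, diffOp_conj]
    rfl

theorem iterated_diff_trivial_of_nilpotent (G : Type*) [Group G] (s : ℕ)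
    (hnil : lcs G (s + 1) = ⊥) (τ g : G) :
    ∀ k : ℕ, (diffOp^[s] (fun k : ℕ => ⁅g⁻¹, τ ^ k⁆)) k = 1 := by
  intro k
  cases s with
  | zero =>
    have h1 : (⁅g⁻¹, τ ^ k⁆ : G) ∈ lcs G 1 := Subgroup.mem_top _
    rw [hnil] at h1
    simpa using h1
  | succ s =>
    rw [iter_formula τ g s]
    have hc : cSeq g τ (s + 1) ∈ lcs G (s + 2) := cSeq_mem G g τ (s + 1)
    rw [hnil] at hc
    rw [Subgroup.mem_bot] at hc
    simp [hc]
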